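/- (Regret of the future-peeking forecaster, equation (eq:lem 1)) In Procedure 2 with nonincreasing positive step sizes η₀ ≥ η₁ ≥ … ≥ η_T, define f̂*_t = argmin_{f ∈ F_p} Σ_{s=0}^{t} Δ_{f,s} for t = 0, 1, …, T. Then E[ Σ_{t=1}^T Δ(f̂*_t, x_t) ] ≤ inf_{f ∈ F_p} { Σ_{t=1}^T Δ(f, x_t) + h(f)/η_T } + (1/η_T)·(1 + ln Σ_{f ∈ F_p} e^{−h(f)}). -/

import Mathlib

set_option maxHeartbeats 1000000


open MeasureTheory ProbabilityTheory Real

noncomputable section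

namespace SLPC

/-- A polygonal line in `ℝ^d`, with `segs` segments and `segs + 1` vertices. -/
structure PolyLine (d : ℕ) where
  segs : ℕ
  vertices : Fin (segs + 1) → EuclideanSpace ℝ (Fin d)

instance (d : ℕ) : Inhabited (PolyLine d) := ⟨⟨0, fun _ => 0⟩⟩

/-- The image (trace) of a polygonal line: the union of its segments. -/
def PolyLine.image {d : ℕ} (f : PolyLine d) : Set (EuclideanSpace ℝ (Fin d)) :=
  ⋃ i : Fin f.segs, segment ℝ (f.vertices i.castSucc) (f.vertices i.succ)

/-- The length of a polygonal line: the sum of the lengths of its segments. -/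
def PolyLine.length {d : ℕ} (f : PolyLine d) : ℝ :=
  ∑ i : Fin f.segs, dist (f.vertices i.castSucc) (f.vertices i.succ)

/-- `Δ(f, x) = inf_s ‖f(s) - x‖²`: the squared distance from `x` to the polygonal line `f`. -/
def sqLoss {d : ℕ} (f : PolyLine d) (x : EuclideanSpace ℝ (Fin d)) : ℝ :=
  (Metric.infDist x f.image) ^ 2

/-- The grid `Q_δ = B(0, √d·R) ∩ δℤ^d`. -/
def Qgrid (d : ℕ) (R δ : ℝ) : Set (EuclideanSpace ℝ (Fin d)) :=
  {x | x ∈ Metric.closedBall (0 : EuclideanSpace ℝ (Fin d)) (Real.sqrt d * R) ∧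
        ∀ i : Fin d, ∃ n : ℤ, x i = n * δ}

/-- `F_{k,L}`: polygonal lines with `k` segments, vertices in `Q_δ`, and length at most `L`. -/
def Fclass (d : ℕ) (R δ L : ℝ) (k : ℕ) : Set (PolyLine d) :=
  {f | f.segs = k ∧ (∀ i, f.vertices i ∈ Qgrid d R δ) ∧ f.length ≤ L}

/-- `F_p = ⋃_{k=1}^p F_{k,L}`. -/
def Fp (d p : ℕ) (R δ L : ℝ) : Set (PolyLine d) :=
  ⋃ k ∈ Finset.Icc 1 p, Fclass d R δ L k

/-- `c₀ = d(2R+δ)²`, a uniform bound on the loss. -/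
def c0 (d : ℕ) (R δ : ℝ) : ℝ := d * (2 * R + δ) ^ 2

/-- Volume of the unit Euclidean ball of `ℝ^d`. -/
def unitBallVol (d : ℕ) : ℝ :=
  (MeasureTheory.volume (Metric.ball (0 : EuclideanSpace ℝ (Fin d)) 1)).toReal

/-- `c₁ = ln(8pe·V_d) + 3d^{3/2} - d`. -/
def c1 (d p : ℕ) : ℝ :=
  Real.log (8 * p * Real.exp 1 * unitBallVol d) + 3 * (d : ℝ) ^ ((3 : ℝ) / 2) - d

/-- `c₂ = ln 2/(δ√d) + d/δ`. -/
def c2 (d : ℕ) (δ : ℝ) : ℝ := Real.log 2 / (δ * Real.sqrt d) + d / δ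

/-- `c₃ = d·ln(√d(2R+δ)/δ)`. -/
def c3 (d : ℕ) (R δ : ℝ) : ℝ := d * Real.log (Real.sqrt d * (2 * R + δ) / δ)

/-- The standard exponential distribution on `ℝ` (density `e^{-z} 1_{z>0}`). -/
def expMeasure : Measure ℝ :=
  MeasureTheory.volume.withDensity fun z =>
    ENNReal.ofReal (if 0 < z then Real.exp (-z) else 0)


section Helpers
open Set Filter
open scoped ENNReal NNReal

private lemma dens_nonneg (z : ℝ) : 0 ≤ (if 0 < z then Real.exp (-z) else 0) := by
  split <;> positivity

private lemma measurable_dens : Measurable fun z : ℝ => (if 0 < z then Real.exp (-z) else 0) := by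
  exact Measurable.ite measurableSet_Ioi (by fun_prop) measurable_const

lemma expMeasure_integral (g : ℝ → ℝ) :
    ∫ u, g u ∂expMeasure = ∫ u in Set.Ioi 0, g u * Real.exp (-u) := by
  have hd : Measurable fun z : ℝ => ((if 0 < z then Real.exp (-z) else 0).toNNReal) :=
    measurable_dens.real_toNNReal
  have : expMeasure = MeasureTheory.volume.withDensity
      fun z => (((if 0 < z then Real.exp (-z) else 0).toNNReal : ℝ≥0) : ℝ≥0∞) := rfl
  rw [this, integral_withDensity_eq_integral_smul hd]
  rw [← integral_indicator measurableSet_Ioi]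
  congr 1
  funext z
  simp only [NNReal.smul_def, Real.coe_toNNReal _ (dens_nonneg z), smul_eq_mul]
  by_cases hz : 0 < z
  · simp [hz, Set.indicator_apply, Set.mem_Ioi, mul_comm]
  · simp [hz, Set.indicator_apply, Set.mem_Ioi]

lemma expMeasure_integrable (g : ℝ → ℝ) :
    Integrable g expMeasure ↔
      IntegrableOn (fun u => g u * Real.exp (-u)) (Set.Ioi 0) := by
  rw [expMeasure, integrable_withDensity_iff measurable_dens.ennreal_ofReal
    (Filter.Eventually.of_forall fun x => ENNReal.ofReal_lt_top)]
  have : (fun x => g x * (ENNReal.ofReal (if 0 < x then Real.exp (-x) else 0)).toReal)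
      = Set.indicator (Set.Ioi 0) (fun u => g u * Real.exp (-u)) := by
    funext z
    rw [ENNReal.toReal_ofReal (dens_nonneg z)]
    by_cases hz : 0 < z
    · simp [hz, Set.indicator_apply, Set.mem_Ioi]
    · simp [hz, Set.indicator_apply, Set.mem_Ioi]
  rw [this, integrable_indicator_iff measurableSet_Ioi]

lemma expMeasure_Iio : expMeasure (Set.Iio 0) = 0 := by
  rw [expMeasure, withDensity_apply _ measurableSet_Iio]
  have : ∫⁻ z in Set.Iio (0:ℝ), ENNReal.ofReal (if 0 < z then Real.exp (-z) else 0)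
      = ∫⁻ z in Set.Iio (0:ℝ), 0 := by
    apply setLIntegral_congr_fun measurableSet_Iio
    exact fun z hz => by
      have : ¬ (0 < z) := not_lt.2 (le_of_lt (Set.mem_Iio.1 hz))
      simp [this]
  simpa using this

lemma cont_max_exp (c : ℝ) : Continuous fun u : ℝ => max (u - c) 0 * Real.exp (-u) :=
  ((continuous_id.sub continuous_const).max continuous_const).mul
    (Real.continuous_exp.comp continuous_neg)

lemma integrableOn_max (c : ℝ) :
    IntegrableOn (fun u => max (u - c) 0 * Real.exp (-u)) (Set.Ioi (0:ℝ)) := by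
  have hb : IntegrableOn (fun u : ℝ => (2 + |c|) * Real.exp (-(1/2) * u)) (Set.Ioi (0:ℝ)) :=
    (exp_neg_integrableOn_Ioi 0 (by norm_num : (0:ℝ) < 1/2)).const_mul _
  refine Integrable.mono' hb (cont_max_exp c).aestronglyMeasurable ?_
  rw [MeasureTheory.ae_restrict_iff' measurableSet_Ioi]
  refine Filter.Eventually.of_forall fun z hz => ?_
  have hz0 : (0:ℝ) < z := hz
  rw [Real.norm_eq_abs]
  have h1 : |max (z - c) 0 * Real.exp (-z)| = max (z - c) 0 * Real.exp (-z) := by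
    rw [abs_of_nonneg]; positivity
  rw [h1]
  have h2 : max (z - c) 0 ≤ z + |c| := by
    apply max_le
    · nlinarith [neg_abs_le c]
    · positivity
  have h3 : z * Real.exp (-z) ≤ 2 * Real.exp (-(1/2) * z) := by
    have : z / 2 ≤ Real.exp (z / 2) := by
      nlinarith [Real.add_one_le_exp (z / 2)]
    calc z * Real.exp (-z) = 2 * (z / 2) * Real.exp (-z) := by ring
      _ ≤ 2 * Real.exp (z / 2) * Real.exp (-z) := by
          have := Real.exp_pos (-z); nlinarith
      _ = 2 * Real.exp (-(1/2) * z) := by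
          rw [mul_assoc, ← Real.exp_add]; ring_nf
  have h4 : |c| * Real.exp (-z) ≤ |c| * Real.exp (-(1/2) * z) := by
    apply mul_le_mul_of_nonneg_left _ (abs_nonneg c)
    apply Real.exp_le_exp.2; nlinarith
  calc max (z - c) 0 * Real.exp (-z) ≤ (z + |c|) * Real.exp (-z) := by
        apply mul_le_mul_of_nonneg_right h2 (Real.exp_pos _).le
    _ = z * Real.exp (-z) + |c| * Real.exp (-z) := by ring
    _ ≤ 2 * Real.exp (-(1/2) * z) + |c| * Real.exp (-(1/2) * z) := by linarith
    _ = (2 + |c|) * Real.exp (-(1/2) * z) := by ring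

lemma integrableOn_sub_exp (c b : ℝ) (hbc : c ≤ b) (hb0 : 0 ≤ b) :
    IntegrableOn (fun z => (z - c) * Real.exp (-z)) (Set.Ioi b) := by
  refine ((integrableOn_max c).mono_set (Set.Ioi_subset_Ioi hb0)).congr_fun ?_ measurableSet_Ioi
  intro z hz
  have hcz : c ≤ z := le_trans hbc (le_of_lt hz)
  show max (z - c) 0 * Real.exp (-z) = (z - c) * Real.exp (-z)
  rw [max_eq_left (by linarith)]

lemma integral_Ioi_sub_exp (c b : ℝ) (hbc : c ≤ b) (hb0 : 0 ≤ b) :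
    ∫ z in Set.Ioi b, (z - c) * Real.exp (-z) = (b - c + 1) * Real.exp (-b) := by
  have hd : ∀ x ∈ Set.Ici b, HasDerivAt (fun z => -(z - c + 1) * Real.exp (-z))
      ((x - c) * Real.exp (-x)) x := by
    intro x _
    have h1 : HasDerivAt (fun z : ℝ => -(z - c + 1)) (-1) x := by
      exact ((hasDerivAt_id x).sub_const c |>.add_const 1).neg
    have h2 : HasDerivAt (fun z : ℝ => Real.exp (-z)) (-Real.exp (-x)) x := by
      simpa using (hasDerivAt_neg x).exp
    have := h1.mul h2
    have e : (x - c) * Real.exp (-x) = -1 * Real.exp (-x) + -(x - c + 1) * -Real.exp (-x) := by ring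
    rw [e]; exact this
  have htend : Tendsto (fun z : ℝ => -(z - c + 1) * Real.exp (-z)) atTop (nhds 0) := by
    have h1 : Tendsto (fun z : ℝ => z * Real.exp (-z)) atTop (nhds 0) := by
      simpa using tendsto_pow_mul_exp_neg_atTop_nhds_zero 1
    have h2 : Tendsto (fun z : ℝ => Real.exp (-z)) atTop (nhds 0) := by
      simpa using Real.tendsto_exp_neg_atTop_nhds_zero
    have := (h1.neg).add ((h2.const_mul (c - 1)))
    simp only [neg_zero, mul_zero, add_zero] at this
    refine this.congr fun z => ?_
    ring
  have := MeasureTheory.integral_Ioi_of_hasDerivAt_of_tendsto'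
    hd (integrableOn_sub_exp c b hbc hb0) htend
  rw [this]
  ring

lemma integral_max_exp_le (c : ℝ) :
    ∫ z in Set.Ioi (0:ℝ), max (z - c) 0 * Real.exp (-z) ≤ Real.exp (-c) := by
  set b := max c 0 with hbdef
  have hb0 : 0 ≤ b := le_max_right c 0
  have hbc : c ≤ b := le_max_left c 0
  have hsplit : ∫ z in Set.Ioi (0:ℝ), max (z - c) 0 * Real.exp (-z)
      = ∫ z in Set.Ioi b, max (z - c) 0 * Real.exp (-z) := by
    rw [← Set.Ioc_union_Ioi_eq_Ioi hb0,
      MeasureTheory.setIntegral_union (Set.Ioc_disjoint_Ioi le_rfl) measurableSet_Ioi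
        ((integrableOn_max c).mono_set Set.Ioc_subset_Ioi_self)
        ((integrableOn_max c).mono_set (Set.Ioi_subset_Ioi hb0))]
    have : ∫ z in Set.Ioc (0:ℝ) b, max (z - c) 0 * Real.exp (-z) = 0 := by
      apply MeasureTheory.setIntegral_eq_zero_of_forall_eq_zero
      intro z hz
      have hz1 : (0:ℝ) < z := hz.1
      have hz2 : z ≤ b := hz.2
      have hzc : z ≤ c := by
        rcases le_or_gt c 0 with hc | hc
        · have : b = 0 := max_eq_right hc
          linarith [hz2, this ▸ hz2]
        · have : b = c := max_eq_left hc.le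
          linarith [this ▸ hz2]
      show max (z - c) 0 * Real.exp (-z) = 0
      rw [max_eq_right (by linarith)]
      ring
    rw [this, zero_add]
  rw [hsplit]
  have hcongr : ∫ z in Set.Ioi b, max (z - c) 0 * Real.exp (-z)
      = ∫ z in Set.Ioi b, (z - c) * Real.exp (-z) := by
    apply MeasureTheory.setIntegral_congr_fun measurableSet_Ioi
    intro z hz
    have : c ≤ z := le_trans hbc (le_of_lt hz)
    show max (z - c) 0 * Real.exp (-z) = (z - c) * Real.exp (-z)
    rw [max_eq_left (by linarith)]
  rw [hcongr, integral_Ioi_sub_exp c b hbc hb0]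
  rcases le_or_gt c 0 with hc | hc
  · have hb : b = 0 := by simp [hbdef, max_eq_right hc]
    rw [hb]
    simp only [neg_zero, Real.exp_zero, mul_one, zero_sub, sub_zero]
    linarith [Real.add_one_le_exp (-c)]
  · have hb : b = c := max_eq_left hc.le
    rw [hb]
    simp

lemma measurable_max_sub (c : ℝ) : Measurable fun u : ℝ => max (u - c) 0 :=
  (measurable_id.sub measurable_const).max measurable_const

lemma exp_max_integrable (c : ℝ) : Integrable (fun u : ℝ => max (u - c) 0) expMeasure := by
  rw [expMeasure_integrable]
  exact integrableOn_max c

lemma exp_max_integral_le (c : ℝ) : ∫ u, max (u - c) 0 ∂expMeasure ≤ Real.exp (-c) := by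
  rw [expMeasure_integral]
  exact integral_max_exp_le c


end Helpers

/-- Cumulative perturbed loss used by Procedure 2: `∑_{s=0}^{t} Δ_{f,s}` where
`Δ_{f,0} = (1/η₀)(h(f) - z_f)` and, for `s ≥ 1`,
`Δ_{f,s} = Δ(f, x_s) + (1/η_s - 1/η_{s-1})(h(f) - z_f)`. -/
def cumLoss2 {d : ℕ} (x : ℕ → EuclideanSpace ℝ (Fin d)) (h : PolyLine d → ℝ) (η : ℕ → ℝ)
    (zf : ℝ) (t : ℕ) (f : PolyLine d) : ℝ :=
  (1 / η 0) * (h f - zf) +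
    ∑ s ∈ Finset.Icc 1 t, (sqLoss f (x s) + (1 / η s - 1 / η (s - 1)) * (h f - zf))

lemma sum_Icc_one_div_sub (η : ℕ → ℝ) (t : ℕ) :
    ∑ s ∈ Finset.Icc 1 t, (1 / η s - 1 / η (s - 1)) = 1 / η t - 1 / η 0 := by
  induction t with
  | zero => simp
  | succ t ih =>
    rw [Finset.sum_Icc_succ_top (Nat.le_add_left 1 t), ih]
    simp only [Nat.add_sub_cancel]
    ring

lemma cumLoss2_closed {d : ℕ} (x : ℕ → EuclideanSpace ℝ (Fin d)) (h : PolyLine d → ℝ)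
    (η : ℕ → ℝ) (w : ℝ) (t : ℕ) (f : PolyLine d) :
    cumLoss2 x h η w t f
      = (∑ s ∈ Finset.Icc 1 t, sqLoss f (x s)) + (1 / η t) * (h f - w) := by
  unfold cumLoss2
  rw [Finset.sum_add_distrib, ← Finset.sum_mul, sum_Icc_one_div_sub η t]
  ring

lemma cumLoss2_succ {d : ℕ} (x : ℕ → EuclideanSpace ℝ (Fin d)) (h : PolyLine d → ℝ)
    (η : ℕ → ℝ) (w : ℝ) (t : ℕ) (f : PolyLine d) :
    cumLoss2 x h η w (t + 1) f = cumLoss2 x h η w t f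
      + (sqLoss f (x (t + 1)) + (1 / η (t + 1) - 1 / η t) * (h f - w)) := by
  unfold cumLoss2
  rw [Finset.sum_Icc_succ_top (Nat.le_add_left 1 t)]
  simp only [Nat.add_sub_cancel]
  ring


/-- **Regret of the future-peeking forecaster** (equation (eq:lem 1)). -/
theorem regret_future_peeking
    (d p T : ℕ) (hd : 1 ≤ d) (hp : 1 ≤ p) (hT : 1 ≤ T)
    (R δ L : ℝ) (hR : 0 < R) (hδ : 0 < δ) (hL : 0 < L)
    (x : ℕ → EuclideanSpace ℝ (Fin d))
    (hx : ∀ t ∈ Finset.Icc 1 T,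
      x t ∈ Metric.closedBall (0 : EuclideanSpace ℝ (Fin d)) (Real.sqrt d * R))
    (hfin : (Fp d p R δ L).Finite)
    (h : PolyLine d → ℝ) (hh : ∀ f ∈ Fp d p R δ L, 0 ≤ h f)
    (η : ℕ → ℝ) (hηpos : ∀ t, t ≤ T → 0 < η t)
    (hηmono : ∀ s t : ℕ, s ≤ t → t ≤ T → η t ≤ η s)
    (Ω : Type*) [MeasurableSpace Ω] (P : Measure Ω) [IsProbabilityMeasure P]
    (z : PolyLine d → Ω → ℝ)
    (hzmeas : ∀ f, Measurable (z f))
    (hzdist : ∀ f ∈ Fp d p R δ L, Measure.map (z f) P = expMeasure)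
    (hzindep : iIndepFun
      (fun f : (Fp d p R δ L) => z f.1) P)
    (fstar : ℕ → Ω → PolyLine d)
    (hmem : ∀ t, t ≤ T → ∀ ω, fstar t ω ∈ Fp d p R δ L)
    (hargmin : ∀ t, t ≤ T → ∀ ω, ∀ g ∈ Fp d p R δ L,
      cumLoss2 x h η (z (fstar t ω) ω) t (fstar t ω) ≤ cumLoss2 x h η (z g ω) t g)
    (hfmeas : ∀ t f, MeasurableSet {ω | fstar t ω = f})
    (hint : ∀ t ∈ Finset.Icc 1 T, Integrable (fun ω => sqLoss (fstar t ω) (x t)) P) :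
    ∑ t ∈ Finset.Icc 1 T, ∫ ω, sqLoss (fstar t ω) (x t) ∂P
      ≤ sInf {v : ℝ | ∃ f ∈ Fp d p R δ L,
            v = (∑ t ∈ Finset.Icc 1 T, sqLoss f (x t)) + h f / η T}
        + (1 / η T) * (1 + Real.log (∑ f ∈ hfin.toFinset, Real.exp (-(h f)))) := by
  have hΩ : Nonempty Ω := by
    by_contra hc
    rw [not_nonempty_iff] at hc
    have h1 : P Set.univ = 1 := measure_univ
    rw [Set.univ_eq_empty_iff.2 hc, measure_empty] at h1
    exact zero_ne_one h1
  obtain ⟨ω₀⟩ := hΩ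
  have hg₀ : fstar 0 ω₀ ∈ Fp d p R δ L := hmem 0 (Nat.zero_le T) ω₀
  set S := hfin.toFinset with hSdef
  have hSne : S.Nonempty := ⟨fstar 0 ω₀, hfin.mem_toFinset.2 hg₀⟩
  set Z := ∑ f ∈ S, Real.exp (-(h f)) with hZdef
  have hZpos : 0 < Z := Finset.sum_pos (fun f _ => Real.exp_pos _) hSne
  set a := Real.log Z with hadef
  set N : Ω → ℝ := fun ω => a + ∑ f ∈ S, max (z f ω - (h f + a)) 0 with hNdef
  have hηT : 0 < η T := hηpos T le_rfl
  have hηTinv : (0:ℝ) ≤ 1 / η T := by positivity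
  have hN : ∀ f' ∈ Fp d p R δ L, ∀ ω, z f' ω - h f' ≤ N ω := by
    intro f' hf' ω
    have hf'S : f' ∈ S := hfin.mem_toFinset.2 hf'
    have h1 : z f' ω - (h f' + a) ≤ max (z f' ω - (h f' + a)) 0 := le_max_left _ _
    have h2 : max (z f' ω - (h f' + a)) 0 ≤ ∑ f ∈ S, max (z f ω - (h f + a)) 0 :=
      Finset.single_le_sum (f := fun f => max (z f ω - (h f + a)) 0)
        (fun f _ => le_max_right _ _) hf'S
    simp only [hNdef]
    linarith
  -- be-the-leader
  have btl : ∀ ω, ∀ t, t ≤ T → ∀ g ∈ Fp d p R δ L,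
      (1 / η 0) * (h (fstar 0 ω) - z (fstar 0 ω) ω)
        + ∑ s ∈ Finset.Icc 1 t, (sqLoss (fstar s ω) (x s)
            + (1 / η s - 1 / η (s - 1)) * (h (fstar s ω) - z (fstar s ω) ω))
      ≤ cumLoss2 x h η (z g ω) t g := by
    intro ω t
    induction t with
    | zero =>
      intro _ g hg
      have harg := hargmin 0 (Nat.zero_le T) ω g hg
      have hempty : Finset.Icc 1 0 = (∅ : Finset ℕ) := by
        apply Finset.Icc_eq_empty; omega
      simpa [cumLoss2, hempty] using harg
    | succ t ih =>
      intro ht g hg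
      have ht' : t ≤ T := Nat.le_of_succ_le ht
      have hft1 : fstar (t + 1) ω ∈ Fp d p R δ L := hmem (t + 1) ht ω
      have key := ih ht' (fstar (t + 1) ω) hft1
      have harg := hargmin (t + 1) ht ω g hg
      rw [Finset.sum_Icc_succ_top (Nat.le_add_left 1 t)]
      simp only [Nat.add_sub_cancel]
      have expand1 := cumLoss2_succ x h η (z (fstar (t + 1) ω) ω) t (fstar (t + 1) ω)
      rw [expand1] at harg
      linarith [key, harg]
  have hcoef : ∀ t ∈ Finset.Icc 1 T, 0 ≤ 1 / η t - 1 / η (t - 1) := by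
    intro t ht
    obtain ⟨h1t, htT⟩ := Finset.mem_Icc.1 ht
    have h1 : 0 < η t := hηpos t htT
    have h3 : η t ≤ η (t - 1) := hηmono (t - 1) t (Nat.sub_le t 1) htT
    have := one_div_le_one_div_of_le h1 h3
    linarith
  -- pathwise bound
  have hpath : ∀ g ∈ Fp d p R δ L, ∀ ω, 0 ≤ z g ω →
      (∑ t ∈ Finset.Icc 1 T, sqLoss (fstar t ω) (x t))
        ≤ (∑ t ∈ Finset.Icc 1 T, sqLoss g (x t)) + (1 / η T) * h g + (1 / η T) * N ω := by
    intro g hg ω hzg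
    have b1 := btl ω T le_rfl g hg
    rw [cumLoss2_closed, Finset.sum_add_distrib] at b1
    have h1 : ∀ t ∈ Finset.Icc 1 T,
        -((1 / η t - 1 / η (t - 1)) * N ω)
          ≤ (1 / η t - 1 / η (t - 1)) * (h (fstar t ω) - z (fstar t ω) ω) := by
      intro t ht
      obtain ⟨h1t, htT⟩ := Finset.mem_Icc.1 ht
      have hc := hcoef t ht
      have hn := hN (fstar t ω) (hmem t htT ω) ω
      nlinarith [mul_le_mul_of_nonneg_left hn hc]
    have h3 := Finset.sum_le_sum h1
    have h2 : ∑ t ∈ Finset.Icc 1 T, -((1 / η t - 1 / η (t - 1)) * N ω)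
        = -((1 / η T - 1 / η 0) * N ω) := by
      rw [Finset.sum_neg_distrib, ← Finset.sum_mul, sum_Icc_one_div_sub]
    rw [h2] at h3
    have hP0 : -((1 / η 0) * N ω) ≤ (1 / η 0) * (h (fstar 0 ω) - z (fstar 0 ω) ω) := by
      have hn := hN (fstar 0 ω) (hmem 0 (Nat.zero_le T) ω) ω
      have h0 : (0:ℝ) ≤ 1 / η 0 := by
        have := hηpos 0 (Nat.zero_le T); positivity
      nlinarith [mul_le_mul_of_nonneg_left hn h0]
    have hzg2 : (1 / η T) * (h g - z g ω) ≤ (1 / η T) * h g := by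
      apply mul_le_mul_of_nonneg_left _ hηTinv
      linarith
    linarith [b1, h3, hP0, hzg2]
  -- a.e. nonnegativity
  have hzae : ∀ g ∈ Fp d p R δ L, ∀ᵐ ω ∂P, 0 ≤ z g ω := by
    intro g hg
    have hpre : P (z g ⁻¹' Set.Iio 0) = 0 := by
      have hm : (Measure.map (z g) P) (Set.Iio 0) = P (z g ⁻¹' Set.Iio 0) :=
        Measure.map_apply (hzmeas g) measurableSet_Iio
      rw [← hm, hzdist g hg, expMeasure_Iio]
    have hset : {ω | ¬ 0 ≤ z g ω} = z g ⁻¹' Set.Iio 0 := by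
      ext ω; simp [not_le]
    rw [MeasureTheory.ae_iff, hset]
    exact hpre
  -- integrability and integral bound over P
  have hmaxint : ∀ f' ∈ Fp d p R δ L, ∀ c : ℝ, Integrable (fun ω => max (z f' ω - c) 0) P := by
    intro f' hf' c
    have h1 : Integrable (fun u : ℝ => max (u - c) 0) (Measure.map (z f') P) := by
      rw [hzdist f' hf']; exact exp_max_integrable c
    have := (integrable_map_measure ((measurable_max_sub c).aestronglyMeasurable)
      (hzmeas f').aemeasurable).1 h1
    exact this
  have hmaxle : ∀ f' ∈ Fp d p R δ L, ∀ c : ℝ,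
      ∫ ω, max (z f' ω - c) 0 ∂P ≤ Real.exp (-c) := by
    intro f' hf' c
    have h1 : ∫ u, max (u - c) 0 ∂(Measure.map (z f') P) = ∫ ω, max (z f' ω - c) 0 ∂P :=
      integral_map (hzmeas f').aemeasurable ((measurable_max_sub c).aestronglyMeasurable)
    rw [← h1, hzdist f' hf']
    exact exp_max_integral_le c
  have hNsumint : Integrable (fun ω => ∑ f ∈ S, max (z f ω - (h f + a)) 0) P :=
    integrable_finset_sum _ (fun f hf => hmaxint f (hfin.mem_toFinset.1 hf) (h f + a))
  have hNint : Integrable N P := by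
    simp only [hNdef]
    exact (integrable_const a).add hNsumint
  have hNval : ∫ ω, N ω ∂P ≤ 1 + a := by
    have h1 : ∫ ω, N ω ∂P = a + ∑ f ∈ S, ∫ ω, max (z f ω - (h f + a)) 0 ∂P := by
      simp only [hNdef]
      rw [integral_add (integrable_const a) hNsumint, integral_const,
        integral_finset_sum _ (fun f hf => hmaxint f (hfin.mem_toFinset.1 hf) (h f + a))]
      simp only [probReal_univ, measure_univ, ENNReal.toReal_one, one_smul]
      rfl
    have h2 : ∑ f ∈ S, ∫ ω, max (z f ω - (h f + a)) 0 ∂P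
        ≤ ∑ f ∈ S, Real.exp (-(h f + a)) :=
      Finset.sum_le_sum fun f hf => hmaxle f (hfin.mem_toFinset.1 hf) _
    have h4 : ∑ f ∈ S, Real.exp (-(h f + a)) = Z * Real.exp (-a) := by
      rw [hZdef, Finset.sum_mul]
      apply Finset.sum_congr rfl
      intro f _
      rw [← Real.exp_add]
      ring_nf
    have h5 : Z * Real.exp (-a) = 1 := by
      rw [hadef, Real.exp_neg, Real.exp_log hZpos]
      field_simp
    rw [h1]
    rw [h4, h5] at h2
    linarith
  -- expectation bound per competitor g
  have hgbound : ∀ g ∈ Fp d p R δ L,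
      (∑ t ∈ Finset.Icc 1 T, ∫ ω, sqLoss (fstar t ω) (x t) ∂P)
        ≤ (∑ t ∈ Finset.Icc 1 T, sqLoss g (x t)) + h g / η T + (1 / η T) * (1 + a) := by
    intro g hg
    have hAint : Integrable (fun ω => ∑ t ∈ Finset.Icc 1 T, sqLoss (fstar t ω) (x t)) P :=
      integrable_finset_sum _ (fun t ht => hint t ht)
    have hFint : Integrable (fun ω => ((∑ t ∈ Finset.Icc 1 T, sqLoss g (x t))
        + (1 / η T) * h g) + (1 / η T) * N ω) P :=
      (integrable_const _).add (hNint.const_mul (1 / η T))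
    have hmono : ∫ ω, (∑ t ∈ Finset.Icc 1 T, sqLoss (fstar t ω) (x t)) ∂P
        ≤ ∫ ω, (((∑ t ∈ Finset.Icc 1 T, sqLoss g (x t)) + (1 / η T) * h g)
            + (1 / η T) * N ω) ∂P := by
      apply integral_mono_ae hAint hFint
      filter_upwards [hzae g hg] with ω hω
      have := hpath g hg ω hω
      linarith
    rw [integral_finset_sum _ (fun t ht => hint t ht)] at hmono
    have hRHS : ∫ ω, (((∑ t ∈ Finset.Icc 1 T, sqLoss g (x t)) + (1 / η T) * h g)
          + (1 / η T) * N ω) ∂P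
        = ((∑ t ∈ Finset.Icc 1 T, sqLoss g (x t)) + (1 / η T) * h g)
          + (1 / η T) * ∫ ω, N ω ∂P := by
      rw [integral_add (integrable_const _) (hNint.const_mul (1 / η T)), integral_const,
        integral_const_mul]
      simp only [probReal_univ, measure_univ, ENNReal.toReal_one, one_smul]
    rw [hRHS] at hmono
    have h5 : (1 / η T) * ∫ ω, N ω ∂P ≤ (1 / η T) * (1 + a) :=
      mul_le_mul_of_nonneg_left hNval hηTinv
    have hdiv : h g / η T = (1 / η T) * h g := by ring
    rw [hdiv]
    linarith [hmono, h5]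
  -- conclude via sInf
  have hne : {v : ℝ | ∃ f ∈ Fp d p R δ L,
      v = (∑ t ∈ Finset.Icc 1 T, sqLoss f (x t)) + h f / η T}.Nonempty :=
    ⟨_, ⟨fstar 0 ω₀, hg₀, rfl⟩⟩
  have h6 : (∑ t ∈ Finset.Icc 1 T, ∫ ω, sqLoss (fstar t ω) (x t) ∂P)
      - (1 / η T) * (1 + a) ≤ sInf {v : ℝ | ∃ f ∈ Fp d p R δ L,
        v = (∑ t ∈ Finset.Icc 1 T, sqLoss f (x t)) + h f / η T} := by
    apply le_csInf hne
    rintro v ⟨f, hf, rfl⟩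
    have := hgbound f hf
    linarith
  linarith [h6]

end SLPC
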